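/- Let k₀ be a field of characteristic p > 0, k = k₀(t), a ∈ k₀ nonzero, and m ≥ 1 an integer with p^m > 2. If x ∈ k satisfies t·(dx/dt) = x − a·x^{p^m}, then x is a constant, i.e. x ∈ k₀. -/
import Mathlib

open Polynomial

lemma D_algebraMap_poly {k₀ : Type} [Field k₀]
    (D : Derivation k₀ (RatFunc k₀) (RatFunc k₀)) (hD : D RatFunc.X = 1) (f : k₀[X]) :
    D (algebraMap k₀[X] (RatFunc k₀) f) = algebraMap k₀[X] (RatFunc k₀) (derivative f) := by
  induction f using Polynomial.induction_on with
  | C a =>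
      rw [RatFunc.algebraMap_C, derivative_C, map_zero]
      exact D.map_algebraMap a
  | add f g hf hg =>
      rw [map_add, map_add, hf, hg, derivative_add, map_add]
  | monomial a n ih =>
      rw [derivative_C_mul, derivative_X_pow, map_mul, RatFunc.algebraMap_C,
        Derivation.leibniz, map_pow, RatFunc.algebraMap_X, Derivation.leibniz_pow, hD,
        map_mul, map_mul, RatFunc.algebraMap_C, map_pow, RatFunc.algebraMap_X]
      simp
      exact Or.inr (D.map_algebraMap n)

/-- Let `k₀` be a field of characteristic `p > 0`, `k = k₀(t)`, `a ∈ k₀` nonzero and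
`m ≥ 1` with `p ^ m > 2`.  If `x ∈ k` satisfies `t * (dx/dt) = x - a * x ^ p ^ m`,
where `d/dt` is the unique derivation of `k₀(t)` over `k₀` with `dt/dt = 1`,
then `x` is a constant, i.e. `x ∈ k₀`. -/
theorem t_mul_derivative_eq_imp_constant
    (p : ℕ) (k₀ : Type) [Field k₀] [CharP k₀ p] (hp : 0 < p)
    (a : k₀) (ha : a ≠ 0) (m : ℕ) (hm : 1 ≤ m) (hpm : 2 < p ^ m)
    (D : Derivation k₀ (RatFunc k₀) (RatFunc k₀)) (hD : D RatFunc.X = 1)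
    (x : RatFunc k₀) (heq : RatFunc.X * D x = x - RatFunc.C a * x ^ p ^ m) :
    ∃ c : k₀, x = RatFunc.C c := by
  obtain ⟨r, hr⟩ : ∃ r, p ^ m = r + 3 := ⟨p ^ m - 3, by omega⟩
  rw [hr] at heq
  set φ := algebraMap k₀[X] (RatFunc k₀) with hφ
  set f := x.num with hf
  set g := x.denom with hg
  have hgne : φ g ≠ 0 := RatFunc.algebraMap_ne_zero (RatFunc.denom_ne_zero x)
  have hnum : φ f = x * φ g := by
    rw [← RatFunc.num_div_denom x]
    exact (div_mul_cancel₀ _ hgne).symm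
  have hDf : φ (derivative f) = x * φ (derivative g) + φ g * D x := by
    rw [← D_algebraMap_poly D hD, ← D_algebraMap_poly D hD, hnum, Derivation.leibniz,
      smul_eq_mul, smul_eq_mul]
  have key' : RatFunc.X * (φ (derivative f) * φ g - φ f * φ (derivative g)) * φ g ^ (r+1)
      = φ f * φ g ^ (r+2) - RatFunc.C a * φ f ^ (r+3) := by
    rw [hDf, hnum]
    linear_combination (φ g)^(r+3) * heq
  have key : (X : k₀[X]) * (derivative f * g - f * derivative g) * g ^ (r+1)
      = f * g ^ (r+2) - C a * f ^ (r+3) := by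
    apply RatFunc.algebraMap_injective k₀
    simpa only [map_mul, map_sub, map_pow, RatFunc.algebraMap_X, RatFunc.algebraMap_C]
      using key'
  have hcop : IsCoprime f g := RatFunc.isCoprime_num_denom x
  have hdvd : g ∣ C a * f ^ (r+3) :=
    ⟨f * g ^ (r+1) - X * (derivative f * g - f * derivative g) * g ^ r, by
      linear_combination key⟩
  have hu : IsUnit g :=
    isUnit_of_dvd_unit ((hcop.symm.pow_right).dvd_of_dvd_mul_right hdvd)
      (isUnit_C.mpr ha.isUnit)
  have hg1 : g = 1 := (RatFunc.monic_denom x).eq_one_of_isUnit hu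
  rw [hg1] at key
  simp only [derivative_one, mul_zero, mul_one, one_pow, sub_zero] at key
  -- key : X * derivative f = f - C a * f ^ (r+3)
  have hd0 : f.natDegree = 0 := by
    by_contra hd
    have hd1 : 1 ≤ f.natDegree := Nat.one_le_iff_ne_zero.mpr hd
    have hfz : f ≠ 0 := fun h => by simp [h] at hd1
    have h1 : (C a * f ^ (r+3)).natDegree = (r+3) * f.natDegree := by
      rw [natDegree_C_mul ha, natDegree_pow]
    have h2 : f.natDegree < (C a * f ^ (r+3)).natDegree := by
      rw [h1]; nlinarith
    have h3 : (f - C a * f ^ (r+3)).natDegree = (r+3) * f.natDegree := by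
      rw [natDegree_sub_eq_right_of_natDegree_lt h2, h1]
    have h4 : (X * derivative f).natDegree ≤ f.natDegree := by
      refine le_trans natDegree_mul_le ?_
      have := natDegree_derivative_le f
      simp only [natDegree_X]
      omega
    rw [key, h3] at h4
    nlinarith
  obtain ⟨c, hc⟩ := natDegree_eq_zero.mp hd0
  refine ⟨c, ?_⟩
  rw [← RatFunc.num_div_denom x, ← hf, ← hg, hg1, ← hc, map_one, div_one, RatFunc.algebraMap_C]
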